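/- In the linear order L_X with β ∈ X a limit ordinal, the open interval ((β,0), (β+ω, 0)) has the order type of the integers ℤ. -/

import Mathlib

open Ordinal Cardinal

noncomputable def omega1' : Ordinal := (Cardinal.aleph 1).ord

/-- The underlying set of the linear order `L_X`. -/
def LX (X : Set Ordinal) : Type 1 :=
  {p : {o : Ordinal // o < omega1'} × ℕ // p.1.1 ∉ X → p.2 = 0}

/-- The order on `L_X`. -/
def LXlt (X : Set Ordinal) : LX X → LX X → Prop := fun p q =>
  p.1.1.1 < q.1.1.1 ∨
  (p.1.1 = q.1.1 ∧ p.1.2 = 0 ∧ 0 < q.1.2) ∨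
  (p.1.1 = q.1.1 ∧ q.1.2 < p.1.2 ∧ 0 < q.1.2)

/-- For `β ∈ X` a limit ordinal, the open interval `((β,0), (β+ω,0))` of `L_X`
has the order type of the integers. -/
theorem stmt8 (X : Set Ordinal)
    (hX : ∀ o ∈ X, o < omega1' ∧ Order.IsSuccLimit o)
    (β : Ordinal) (hβ : β ∈ X) (hβ1 : β < omega1')
    (hβω : β + Ordinal.omega0 < omega1') :
    Nonempty
      ((fun p q :
          {p : LX X // LXlt X ⟨(⟨β, hβ1⟩, 0), fun _ => rfl⟩ p ∧
             LXlt X p ⟨(⟨β + Ordinal.omega0, hβω⟩, 0), fun _ => rfl⟩} =>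
            LXlt X p.1 q.1) ≃r ((· < ·) : ℤ → ℤ → Prop)) := by
  set T := {p : LX X // LXlt X ⟨(⟨β, hβ1⟩, 0), fun _ => rfl⟩ p ∧
             LXlt X p ⟨(⟨β + Ordinal.omega0, hβω⟩, 0), fun _ => rfl⟩} with hT
  -- key ordinal facts
  have hlt : ∀ n : ℕ, β + (n : Ordinal) < β + Ordinal.omega0 := fun n =>
    (add_lt_add_iff_left β).mpr (Ordinal.nat_lt_omega0 n)
  have hlt1 : ∀ n : ℕ, β + (n : Ordinal) < omega1' := fun n => (hlt n).trans hβω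
  have hself : ∀ n : ℕ, 0 < n → β < β + (n : Ordinal) := by
    intro n hn
    have : β + (0 : Ordinal) < β + (n : Ordinal) :=
      (add_lt_add_iff_left β).mpr (by exact_mod_cast Nat.cast_pos.mpr hn)
    simpa using this
  have hβωself : β < β + Ordinal.omega0 := by
    have : β + (0 : Ordinal) < β + Ordinal.omega0 :=
      (add_lt_add_iff_left β).mpr Ordinal.omega0_pos
    simpa using this
  have hXsucc : ∀ n : ℕ, 0 < n → β + (n : Ordinal) ∉ X := by
    intro n hn h
    obtain ⟨k, rfl⟩ : ∃ k, n = k + 1 := ⟨n - 1, by omega⟩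
    have heq : β + ((k + 1 : ℕ) : Ordinal) = Order.succ (β + (k : Ordinal)) := by
      push_cast
      rw [← add_assoc, add_one_eq_succ]
    rw [heq] at h
    exact Order.not_isSuccLimit_succ _ (hX _ h).2
  have lxlt_mk : ∀ (a c : {o : Ordinal // o < omega1'}) (bn dn : ℕ) ha hc,
      LXlt X ⟨(a, bn), ha⟩ ⟨(c, dn), hc⟩ ↔
        (a.1 < c.1 ∨ (a = c ∧ bn = 0 ∧ 0 < dn) ∨ (a = c ∧ dn < bn ∧ 0 < dn)) :=
    fun _ _ _ _ _ _ => Iff.rfl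
  -- the two families of points
  let A : ℕ → T := fun k =>
    ⟨⟨((⟨β + ((k + 1 : ℕ) : Ordinal), hlt1 _⟩ : {o : Ordinal // o < omega1'}), 0),
        fun _ => rfl⟩,
      Or.inl (hself _ (Nat.succ_pos _)), Or.inl (hlt _)⟩
  let B : ℕ → T := fun k =>
    ⟨⟨((⟨β, hβ1⟩ : {o : Ordinal // o < omega1'}), k + 1),
        fun h' => absurd hβ h'⟩,
      Or.inr (Or.inl ⟨rfl, rfl, Nat.succ_pos _⟩), Or.inl hβωself⟩
  have hAA : ∀ j k : ℕ, LXlt X (A j).1 (A k).1 ↔ j < k := by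
    intro j k
    rw [lxlt_mk]
    constructor
    · rintro (h | ⟨-, -, h0⟩ | ⟨-, -, h0⟩)
      · have := (add_lt_add_iff_left β).mp h
        exact_mod_cast Nat.succ_lt_succ_iff.mp (by exact_mod_cast this)
      · exact absurd h0 (lt_irrefl 0)
      · exact absurd h0 (lt_irrefl 0)
    · intro h
      exact Or.inl ((add_lt_add_iff_left β).mpr (by exact_mod_cast Nat.succ_lt_succ h))
  have hAB : ∀ j k : ℕ, ¬ LXlt X (A j).1 (B k).1 := by
    intro j k h
    rw [lxlt_mk] at h
    rcases h with h | ⟨h, -, -⟩ | ⟨h, -, -⟩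
    · exact absurd h (not_lt.mpr (hself _ (Nat.succ_pos _)).le)
    · exact absurd (congrArg Subtype.val h) (ne_of_gt (hself _ (Nat.succ_pos _)))
    · exact absurd (congrArg Subtype.val h) (ne_of_gt (hself _ (Nat.succ_pos _)))
  have hBA : ∀ j k : ℕ, LXlt X (B j).1 (A k).1 := by
    intro j k
    rw [lxlt_mk]
    exact Or.inl (hself _ (Nat.succ_pos _))
  have hBB : ∀ j k : ℕ, LXlt X (B j).1 (B k).1 ↔ k < j := by
    intro j k
    rw [lxlt_mk]
    constructor
    · rintro (h | ⟨-, h0, -⟩ | ⟨-, h, -⟩)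
      · exact absurd h (lt_irrefl _)
      · exact absurd h0 (Nat.succ_ne_zero _)
      · omega
    · intro h
      exact Or.inr (Or.inr ⟨rfl, by omega, Nat.succ_pos _⟩)
  -- the forward map
  let f : ℤ → T := fun n => if h : 0 ≤ n then A n.toNat else B (-n - 1).toNat
  have hfpos : ∀ n : ℤ, 0 ≤ n → f n = A n.toNat := fun n h => dif_pos h
  have hfneg : ∀ n : ℤ, ¬ 0 ≤ n → f n = B (-n - 1).toNat := fun n h => dif_neg h
  have hmri : ∀ a b : ℤ, LXlt X (f a).1 (f b).1 ↔ a < b := by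
    intro a b
    by_cases ha : 0 ≤ a <;> by_cases hb : 0 ≤ b
    · rw [hfpos a ha, hfpos b hb, hAA]; omega
    · rw [hfpos a ha, hfneg b hb]
      exact iff_of_false (hAB _ _) (by omega)
    · rw [hfneg a ha, hfpos b hb]
      exact iff_of_true (hBA _ _) (by omega)
    · rw [hfneg a ha, hfneg b hb, hBB]; omega
  have hinj : Function.Injective f := by
    intro a b hab
    by_contra hne
    rcases lt_or_gt_of_ne hne with h | h
    · have h2 := (hmri a b).mpr h
      rw [hab] at h2
      rcases h2 with h' | ⟨-, h0, h1⟩ | ⟨-, h', -⟩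
      · exact absurd h' (lt_irrefl _)
      · omega
      · exact absurd h' (lt_irrefl _)
    · have h2 := (hmri b a).mpr h
      rw [hab] at h2
      rcases h2 with h' | ⟨-, h0, h1⟩ | ⟨-, h', -⟩
      · exact absurd h' (lt_irrefl _)
      · omega
      · exact absurd h' (lt_irrefl _)
  have hsurj : Function.Surjective f := by
    rintro ⟨⟨⟨⟨α, hα⟩, m⟩, hm⟩, h1, h2⟩
    rw [lxlt_mk] at h1 h2
    by_cases hαβ : α = β
    · -- from h1, get 0 < m
      have hm' : 0 < m := by
        rcases h1 with h | ⟨-, -, h0⟩ | ⟨-, -, h0⟩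
        · exact absurd hαβ (ne_of_gt h)
        · exact h0
        · exact h0
      refine ⟨-(m : ℤ), ?_⟩
      rw [hfneg _ (by omega)]
      refine Subtype.ext (Subtype.ext (Prod.ext (Subtype.ext ?_) ?_))
      · exact hαβ.symm
      · show (-(-(m : ℤ)) - 1).toNat + 1 = m
        omega
    · -- β < α < β + ω
      have hβα : β < α := by
        rcases h1 with h | ⟨h, -, -⟩ | ⟨h, -, -⟩
        · exact h
        · exact absurd (congrArg Subtype.val h).symm hαβ
        · exact absurd (congrArg Subtype.val h).symm hαβ
      have hαω : α < β + Ordinal.omega0 := by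
        rcases h2 with h | ⟨-, -, h0⟩ | ⟨-, -, h0⟩
        · exact h
        · exact absurd h0 (lt_irrefl 0)
        · exact absurd h0 (lt_irrefl 0)
      have hsub : α - β < Ordinal.omega0 :=
        Ordinal.sub_lt_of_lt_add hαω Ordinal.omega0_pos
      obtain ⟨n, hn⟩ := Ordinal.lt_omega0.mp hsub
      have hαn : α = β + (n : Ordinal) := by
        rw [← hn, Ordinal.add_sub_cancel_of_le hβα.le]
      have hnpos : 0 < n := by
        rcases Nat.eq_zero_or_pos n with h | h
        · subst h; simp at hαn; exact absurd hαn hαβ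
        · exact h
      have hm0 : m = 0 := hm (show α ∉ X by rw [hαn]; exact hXsucc n hnpos)
      refine ⟨((n : ℤ) - 1), ?_⟩
      rw [hfpos _ (by omega)]
      refine Subtype.ext (Subtype.ext (Prod.ext (Subtype.ext ?_) ?_))
      · show β + ((((n : ℤ) - 1).toNat + 1 : ℕ) : Ordinal) = α
        rw [hαn]
        congr 2
        omega
      · exact hm0.symm
  let e : ℤ ≃ T := Equiv.ofBijective f ⟨hinj, hsurj⟩
  exact ⟨(RelIso.mk e fun {a b} => hmri a b).symm⟩
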